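/- arXiv:2509.14179 — 2 statements merged into one kernel-verified Lean document; each statement's English description precedes it below -/
import Mathlib

section
/- Let R be a commutative ring, p and q distinct prime ideals of R, and κ(p), κ(q) their residue fields. Then κ(q) ⊗^L_R κ(p) = 0 in the derived category D(R). -/
open CategoryTheory CategoryTheory.Limits

open MonoidalCategory

universe u

variable (R : Type u) [CommRing R]

/-- The residue field `κ(p) = R_p / p R_p` of a commutative ring at a prime ideal `p`,
as an `R`-module. -/
noncomputable abbrev residueFieldAt (p : Ideal R) [p.IsPrime] : ModuleCat.{u} R :=
  ModuleCat.of R (IsLocalRing.ResidueField (Localization.AtPrime p))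

lemma chain_smul_comm (B : ModuleCat.{u} R) (P : ProjectiveResolution B) (x : R) :
    (x • 𝟙 P.complex) ≫ P.π = P.π ≫ (ChainComplex.single₀ (ModuleCat.{u} R)).map (x • 𝟙 B) := by
  apply HomologicalComplex.hom_ext
  intro i
  match i with
  | 0 =>
    simp [Linear.smul_comp, Linear.comp_smul]
    ext
    rfl
  | (n+1) =>
    apply (HomologicalComplex.isZero_single_obj_X (ComplexShape.down ℕ) 0 B _ (by simp)).eq_of_tgt

lemma chain_zero_comm (B : ModuleCat.{u} R) (P : ProjectiveResolution B) :
    (0 : P.complex ⟶ P.complex) ≫ P.π =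
      P.π ≫ (ChainComplex.single₀ (ModuleCat.{u} R)).map (0 : B ⟶ B) := by
  apply HomologicalComplex.hom_ext
  intro i
  match i with
  | 0 =>
    simp
    rfl
  | (n+1) =>
    apply (HomologicalComplex.isZero_single_obj_X (ComplexShape.down ℕ) 0 B _ (by simp)).eq_of_tgt

lemma tor_smul_comm (n : ℕ) (A B : ModuleCat.{u} R) (x : R) :
    ((Tor (ModuleCat.{u} R) n).map (x • 𝟙 A)).app B =
      ((Tor (ModuleCat.{u} R) n).obj A).map (x • 𝟙 B) := by
  have P : ProjectiveResolution B := (HasProjectiveResolution.out (Z := B)).some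
  rw [Tor_map, ProjectiveResolution.leftDerived_app_eq _ P n]
  show _ = (((tensoringLeft (ModuleCat.{u} R)).obj A).leftDerived n).map (x • 𝟙 B)
  rw [Functor.leftDerived_map_eq _ n (x • 𝟙 B) (x • 𝟙 P.complex) (chain_smul_comm R B P x)]
  congr 2
  rw [Functor.comp_map]
  congr 1
  apply HomologicalComplex.hom_ext
  intro i
  simp [MonoidalLinear.smul_whiskerRight, Functor.map_smul]
  rfl

lemma tor_map_zero_right (n : ℕ) (A B : ModuleCat.{u} R) :
    ((Tor (ModuleCat.{u} R) n).obj A).map (0 : B ⟶ B) = 0 := by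
  have P : ProjectiveResolution B := (HasProjectiveResolution.out (Z := B)).some
  show (((tensoringLeft (ModuleCat.{u} R)).obj A).leftDerived n).map (0 : B ⟶ B) = 0
  rw [Functor.leftDerived_map_eq _ n (0 : B ⟶ B) (0 : P.complex ⟶ P.complex)
    (chain_zero_comm R B P)]
  rw [Functor.map_zero, Limits.zero_comp, Limits.comp_zero]

lemma tor_map_zero_left (n : ℕ) (A B : ModuleCat.{u} R) :
    ((Tor (ModuleCat.{u} R) n).map (0 : A ⟶ A)).app B = 0 := by
  have P : ProjectiveResolution B := (HasProjectiveResolution.out (Z := B)).some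
  rw [Tor_map, ProjectiveResolution.leftDerived_app_eq _ P n]
  have h : (NatTrans.mapHomologicalComplex
      ((tensoringLeft (ModuleCat.{u} R)).map (0 : A ⟶ A))
      (ComplexShape.down ℕ)).app P.complex = 0 := by
    apply HomologicalComplex.hom_ext
    intro i
    simp [MonoidalPreadditive.zero_whiskerRight]
    rfl
  rw [h, Functor.map_zero, Limits.zero_comp, Limits.comp_zero]
  rfl

lemma smul_id_eq_zero_of_mem (p : Ideal R) [p.IsPrime] (x : R) (hx : x ∈ p) :
    (x • 𝟙 (ModuleCat.of R (IsLocalRing.ResidueField (Localization.AtPrime p)))) = 0 := by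
  have key : ∀ m : IsLocalRing.ResidueField (Localization.AtPrime p), x • m = 0 := by
    intro m
    rw [← algebraMap_smul (IsLocalRing.ResidueField (Localization.AtPrime p)) x m,
      IsScalarTower.algebraMap_apply R (Localization.AtPrime p) _ x,
      IsLocalRing.ResidueField.algebraMap_eq,
      show IsLocalRing.residue (Localization.AtPrime p) (algebraMap R _ x) = 0 from
          (IsLocalRing.residue_eq_zero_iff _).mpr
          ((IsLocalization.AtPrime.to_map_mem_maximal_iff _ p x).mpr hx), zero_smul]
  ext m
  exact key m

lemma isIso_smul_id_of_not_mem (p : Ideal R) [p.IsPrime] (x : R) (hx : x ∉ p) :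
    IsIso (x • 𝟙 (ModuleCat.of R (IsLocalRing.ResidueField (Localization.AtPrime p)))) := by
  set κ := IsLocalRing.ResidueField (Localization.AtPrime p)
  have hu : IsUnit (algebraMap R κ x) := by
    rw [IsScalarTower.algebraMap_apply R (Localization.AtPrime p) _ x]
    exact ((IsLocalization.AtPrime.isUnit_to_map_iff (Localization.AtPrime p) p x).mpr hx).map _
  obtain ⟨u, hueq⟩ := hu
  let g0 : κ →ₗ[R] κ :=
    { toFun := fun m => (↑u⁻¹ : κ) * m
      map_add' := fun a b => mul_add _ _ _
      map_smul' := fun r m => mul_smul_comm _ _ _ }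
  have h1 : ∀ m : κ, (↑u⁻¹ : κ) * ((algebraMap R κ) x * m) = m := fun m => by
    rw [← hueq, Units.inv_mul_cancel_left]
  have h2 : ∀ m : κ, (algebraMap R κ) x * ((↑u⁻¹ : κ) * m) = m := fun m => by
    rw [← hueq, Units.mul_inv_cancel_left]
  refine ⟨(ModuleCat.ofHom g0 : ModuleCat.of R κ ⟶ ModuleCat.of R κ), ?_, ?_⟩
  · ext m
    show ((↑u⁻¹ : κ) * (x • (show κ from m)) : κ) = (show κ from m)
    rw [Algebra.smul_def]
    exact h1 m
  · ext m
    show (x • ((↑u⁻¹ : κ) * (show κ from m)) : κ) = (show κ from m)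
    rw [Algebra.smul_def]
    exact h2 m

/-- For distinct primes `p ≠ q` of a commutative ring `R`, the derived tensor product
`κ(q) ⊗^L_R κ(p)` vanishes; equivalently, `Tor_n^R(κ(q), κ(p)) = 0` for all `n`. -/
theorem residueField_lTensor_residueField_eq_zero
    (p q : Ideal R) [p.IsPrime] [q.IsPrime] (hpq : p ≠ q) :
    ∀ n : ℕ, IsZero (((Tor (ModuleCat.{u} R) n).obj (residueFieldAt R q)).obj
      (residueFieldAt R p)) := by
  intro n
  rw [IsZero.iff_id_eq_zero]
  have hcases : ¬ p ≤ q ∨ ¬ q ≤ p := by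
    by_contra h
    push_neg at h
    exact hpq (le_antisymm h.1 h.2)
  rcases hcases with h | h
  · obtain ⟨x, hxp, hxq⟩ := SetLike.not_le_iff_exists.mp h
    have hz : (x • 𝟙 (residueFieldAt R p)) = 0 := smul_id_eq_zero_of_mem R p x hxp
    have hi : IsIso (x • 𝟙 (residueFieldAt R q)) := isIso_smul_id_of_not_mem R q x hxq
    have h0 : ((Tor (ModuleCat.{u} R) n).map (x • 𝟙 (residueFieldAt R q))).app
        (residueFieldAt R p) = 0 := by
      rw [tor_smul_comm, hz, tor_map_zero_right]
    have hii : IsIso (((Tor (ModuleCat.{u} R) n).map (x • 𝟙 (residueFieldAt R q))).app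
        (residueFieldAt R p)) := inferInstance
    calc 𝟙 _ = inv (((Tor (ModuleCat.{u} R) n).map (x • 𝟙 (residueFieldAt R q))).app
            (residueFieldAt R p)) ≫ (((Tor (ModuleCat.{u} R) n).map
            (x • 𝟙 (residueFieldAt R q))).app (residueFieldAt R p)) :=
          (IsIso.inv_hom_id _).symm
      _ = _ ≫ 0 := congrArg _ h0
      _ = 0 := Limits.comp_zero
  · obtain ⟨x, hxq, hxp⟩ := SetLike.not_le_iff_exists.mp h
    have hz : (x • 𝟙 (residueFieldAt R q)) = 0 := smul_id_eq_zero_of_mem R q x hxq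
    have hi : IsIso (x • 𝟙 (residueFieldAt R p)) := isIso_smul_id_of_not_mem R p x hxp
    have h0 : ((Tor (ModuleCat.{u} R) n).obj (residueFieldAt R q)).map
        (x • 𝟙 (residueFieldAt R p)) = 0 := by
      rw [← tor_smul_comm, hz, tor_map_zero_left]
    have hii : IsIso (((Tor (ModuleCat.{u} R) n).obj (residueFieldAt R q)).map
        (x • 𝟙 (residueFieldAt R p))) := inferInstance
    calc 𝟙 _ = inv (((Tor (ModuleCat.{u} R) n).obj (residueFieldAt R q)).map
            (x • 𝟙 (residueFieldAt R p))) ≫ (((Tor (ModuleCat.{u} R) n).obj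
            (residueFieldAt R q)).map (x • 𝟙 (residueFieldAt R p))) :=
          (IsIso.inv_hom_id _).symm
      _ = _ ≫ 0 := congrArg _ h0
      _ = 0 := Limits.comp_zero
end

section
/- A commutative ring R is semi-local semi-artinian if and only if R is isomorphic to a finite direct product of local rings each of whose maximal ideal is T-nilpotent. -/
universe u

/-- An ideal `I` is T-nilpotent if for every sequence `r₀, r₁, …` of elements of `I`
some finite product `r₀ r₁ ⋯ rₙ` vanishes. -/
def Ideal.IsTNilpotent {A : Type*} [CommRing A] (I : Ideal A) : Prop :=
  ∀ r : ℕ → A, (∀ n, r n ∈ I) → ∃ n : ℕ, (∏ i ∈ Finset.range (n + 1), r i) = 0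

/-- A commutative ring is semi-local if it has only finitely many maximal ideals. -/
def IsSemiLocalRing (R : Type*) [CommRing R] : Prop :=
  {I : Ideal R | I.IsMaximal}.Finite

/-- A commutative ring is semi-artinian if every proper ideal is covered by a
strictly larger ideal which is a cover (equivalently, every nonzero quotient
module of `R` has nonzero socle). -/
def IsSemiArtinianRing (R : Type*) [CommRing R] : Prop :=
  ∀ I : Ideal R, I ≠ ⊤ → ∃ J : Ideal R, I ⋖ J

set_option linter.unusedSectionVars false

section Cover
variable {R : Type*} [CommRing R]

lemma colon_isMaximal_of_covBy {I J : Ideal R} (h : I ⋖ J) {x : R} (hxJ : x ∈ J) (hxI : x ∉ I) :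
    (I.colon (Ideal.span {x})).IsMaximal := by
  rw [Ideal.isMaximal_iff]
  refine ⟨fun h1 => hxI (by simpa using Ideal.mem_colon_span_singleton.mp h1), ?_⟩
  intro K s hle hs hsK
  have hsx : s * x ∉ I := fun hc => hs (Ideal.mem_colon_span_singleton.mpr hc)
  have hsup : I ⊔ Ideal.span {s * x} = J := by
    have hle2 : I ⊔ Ideal.span {s * x} ≤ J :=
      sup_le h.1.le ((Ideal.span_singleton_le_iff_mem _).mpr (Ideal.mul_mem_left _ _ hxJ))
    rcases eq_or_lt_of_le hle2 with h' | h'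
    · exact h'
    · exact absurd h' (h.2 (lt_of_le_of_ne le_sup_left
        (fun he => hsx (he ▸ (le_sup_right : Ideal.span {s*x} ≤ I ⊔ Ideal.span {s*x})
          (Ideal.mem_span_singleton_self _)))))
  have hxmem : x ∈ I ⊔ Ideal.span {s * x} := hsup ▸ hxJ
  obtain ⟨a, ha, b, hb, hab⟩ := Submodule.mem_sup.mp hxmem
  obtain ⟨t, rfl⟩ := Ideal.mem_span_singleton.mp hb
  have h1 : 1 - s * t ∈ I.colon (Ideal.span {x}) := by
    rw [Ideal.mem_colon_span_singleton]
    have : (1 - s * t) * x = a := by linear_combination -hab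
    rw [this]; exact ha
  have : (1 : R) = (1 - s * t) + s * t := by ring
  rw [this]
  exact K.add_mem (hle h1) (K.mul_mem_right _ hsK)

lemma covBy_of_colon_isMaximal {I : Ideal R} {x : R} (hxI : x ∉ I)
    (hm : (I.colon (Ideal.span {x})).IsMaximal) : I ⋖ I ⊔ Ideal.span {x} := by
  constructor
  · exact lt_of_le_of_ne le_sup_left
      (fun he => hxI (he ▸ (le_sup_right : Ideal.span {x} ≤ _) (Ideal.mem_span_singleton_self _)))
  · intro K hIK hKJ
    obtain ⟨k, hkK, hkI⟩ := SetLike.exists_of_lt hIK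
    have hkmem : k ∈ I ⊔ Ideal.span {x} := hKJ.le hkK
    obtain ⟨a, ha, b, hb, hab⟩ := Submodule.mem_sup.mp hkmem
    obtain ⟨t, rfl⟩ := Ideal.mem_span_singleton.mp hb
    have htx : t ∉ I.colon (Ideal.span {x}) := by
      intro hc
      rw [Ideal.mem_colon_span_singleton] at hc
      exact hkI (hab ▸ I.add_mem ha (by rwa [mul_comm] at hc))
    obtain ⟨s, c, hc, hsc⟩ := hm.exists_inv htx
    have hxtK : x * t ∈ K := by
      have : x * t = k - a := by rw [← hab]; ring
      rw [this]; exact K.sub_mem hkK (hIK.le ha)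
    have hxK : x ∈ K := by
      have hx : x = c * x + s * (x * t) := by linear_combination (-x) * hsc
      rw [hx]
      exact K.add_mem (hIK.le (Ideal.mem_colon_span_singleton.mp hc))
        (K.mul_mem_left _ hxtK)
    exact absurd (sup_le hIK.le ((Ideal.span_singleton_le_iff_mem _).mpr hxK)) hKJ.not_ge
end Cover

section Jacobson
variable {R : Type*} [CommRing R]

lemma Ideal.IsTNilpotent.isNilpotent_of_mem {I : Ideal R} (hI : I.IsTNilpotent) {x : R}
    (hx : x ∈ I) : IsNilpotent x := by
  obtain ⟨n, hn⟩ := hI (fun _ => x) (fun _ => hx)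
  exact ⟨n + 1, by simpa using hn⟩

lemma jacobson_bot_isTNilpotent (hSA : IsSemiArtinianRing R) :
    (Ideal.jacobson (⊥ : Ideal R)).IsTNilpotent := by
  intro r hr
  by_contra hcon
  push_neg at hcon
  set p : ℕ → R := fun n => ∏ i ∈ Finset.range (n+1), r i with hp
  set S : Set (Ideal R) := {I : Ideal R | ∀ k, p k ∉ I} with hS
  have hbot : (⊥ : Ideal R) ∈ S := fun k hk => hcon k (by simpa using hk)
  have hchain : ∀ c ⊆ S, IsChain (· ≤ ·) c → ∀ y ∈ c, ∃ ub ∈ S, ∀ z ∈ c, z ≤ ub := by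
    intro c hc hchain y hy
    refine ⟨sSup c, fun k hk => ?_, fun z hz => le_sSup hz⟩
    obtain ⟨T, hTc, hkT⟩ := (Submodule.mem_sSup_of_directed ⟨y, hy⟩ hchain.directedOn).mp hk
    exact hc hTc k hkT
  obtain ⟨I, -, hIm⟩ := zorn_le_nonempty₀ S hchain ⊥ hbot
  have hInetop : I ≠ ⊤ := fun h => hIm.1 0 (h ▸ Submodule.mem_top)
  obtain ⟨J, hcov⟩ := hSA I hInetop
  obtain ⟨x, hxJ, hxI⟩ := SetLike.exists_of_lt hcov.lt
  have hcol := colon_isMaximal_of_covBy hcov hxJ hxI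
  have hjle : Ideal.jacobson (⊥ : Ideal R) ≤ I.colon (Ideal.span {x}) :=
      sInf_le ⟨bot_le, hcol⟩
  have hnot : I ⊔ Ideal.span {x} ∉ S := fun hmem =>
      hxI (hIm.2 hmem le_sup_left
        ((le_sup_right : Ideal.span {x} ≤ _) (Ideal.mem_span_singleton_self x)))
  obtain ⟨k, hk⟩ : ∃ k, p k ∈ I ⊔ Ideal.span {x} := by
    by_contra hno; push_neg at hno; exact hnot hno
  obtain ⟨a, ha, b, hb, hab⟩ := Submodule.mem_sup.mp hk
  obtain ⟨t, rfl⟩ := Ideal.mem_span_singleton.mp hb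
  have hmem : p (k+1) ∈ I := by
    have hps : p (k+1) = p k * r (k+1) := Finset.prod_range_succ r (k+1)
    rw [hps, ← hab]
    have h2 : r (k+1) * x ∈ I := Ideal.mem_colon_span_singleton.mp (hjle (hr (k+1)))
    have he : (a + x * t) * r (k+1) = a * r (k+1) + t * (r (k+1) * x) := by ring
    rw [he]
    exact I.add_mem (I.mul_mem_right _ ha) (I.mul_mem_left _ h2)
  exact hIm.1 (k+1) hmem
end Jacobson

section Pi
variable {n : ℕ} (A : Fin n → Type u) [∀ i, CommRing (A i)] [∀ i, IsLocalRing (A i)]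


private lemma exists_single_not_mem {I : Ideal (∀ i, A i)} (hI : I ≠ ⊤) :
    ∃ i, (Pi.single i 1 : ∀ i, A i) ∉ I := by
  by_contra h
  push_neg at h
  refine hI (I.eq_top_of_isUnit_mem ?_ isUnit_one)
  have : (1 : ∀ i, A i) = ∑ i, Pi.single i 1 :=
    ((CompleteOrthogonalIdempotents.single A).complete).symm
  rw [this]
  exact Submodule.sum_mem I fun i _ => h i

private lemma eval_surjective (i : Fin n) : Function.Surjective (Pi.evalRingHom A i) :=
  fun a => ⟨Pi.single i a, Pi.single_eq_same i a⟩

private lemma IE_isMaximal (i : Fin n) :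
    (Ideal.comap (Pi.evalRingHom A i) (IsLocalRing.maximalIdeal (A i))).IsMaximal :=
  Ideal.comap_isMaximal_of_surjective _ (eval_surjective A i)

lemma isSemiLocalRing_pi : IsSemiLocalRing (∀ i, A i) := by
  classical
  apply Set.Finite.subset
    (Set.finite_range fun i => Ideal.comap (Pi.evalRingHom A i) (IsLocalRing.maximalIdeal (A i)))
  rintro M hM
  haveI : M.IsMaximal := hM
  obtain ⟨i, hi⟩ := exists_single_not_mem A hM.ne_top
  have hle : M ≤ Ideal.comap (Pi.evalRingHom A i) (IsLocalRing.maximalIdeal (A i)) := by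
    intro x hx
    show x i ∈ IsLocalRing.maximalIdeal (A i)
    rw [IsLocalRing.mem_maximalIdeal]
    intro hunit
    obtain ⟨u, hu⟩ := isUnit_iff_exists_inv.mp hunit
    have h1e : (1 : ∀ i, A i) - Pi.single i 1 ∈ M := by
      have heq : (1 : ∀ i, A i) - Pi.single i 1 = ∑ j ∈ Finset.univ.erase i, Pi.single j 1 := by
        rw [Finset.sum_erase_eq_sub (Finset.mem_univ i),
          (CompleteOrthogonalIdempotents.single A).complete]
      rw [heq]
      refine Submodule.sum_mem M fun j hj => ?_
      have hij : i ≠ j := fun h => (Finset.mem_erase.mp hj).1 h.symm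
      have h0 : (Pi.single i 1 : ∀ i, A i) * Pi.single j 1 = 0 :=
        (CompleteOrthogonalIdempotents.single A).ortho hij
      rcases (hM.isPrime.mem_or_mem (h0 ▸ M.zero_mem)) with h | h
      · exact absurd h hi
      · exact h
    have hy : x * Pi.single i 1 + (1 - Pi.single i 1) ∈ M :=
      M.add_mem (M.mul_mem_right _ hx) h1e
    have hyu : IsUnit (x * Pi.single i 1 + (1 - Pi.single i 1)) := by
      refine isUnit_iff_exists_inv.mpr ⟨Function.update (1 : ∀ i, A i) i u, ?_⟩
      ext j
      by_cases hj : j = i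
      · subst hj
        simp [Pi.single_eq_same, hu]
      · simp [Pi.single_eq_of_ne hj, Function.update_of_ne hj]
    exact hM.ne_top (M.eq_top_of_isUnit_mem hy hyu)
  exact ⟨i, (hM.eq_of_le (IE_isMaximal A i).ne_top hle).symm⟩

lemma isSemiArtinianRing_pi
    (hT : ∀ i, (IsLocalRing.maximalIdeal (A i)).IsTNilpotent) :
    IsSemiArtinianRing (∀ i, A i) := by
  classical
  intro I hI
  obtain ⟨i, hi⟩ := exists_single_not_mem A hI
  by_contra hno
  push_neg at hno
  have hstep : ∀ x : ∀ i, A i, x ∉ I →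
      ∃ r : ∀ i, A i, r ∈ Ideal.comap (Pi.evalRingHom A i) (IsLocalRing.maximalIdeal (A i)) ∧
        r * x ∉ I := by
    intro x hx
    by_contra h
    push_neg at h
    have hle : Ideal.comap (Pi.evalRingHom A i) (IsLocalRing.maximalIdeal (A i)) ≤
        I.colon (Ideal.span {x}) := fun r hr => Ideal.mem_colon_span_singleton.mpr (h r hr)
    have hcolne : I.colon (Ideal.span {x}) ≠ ⊤ := by
      intro ht
      refine hx ?_
      have h1 : (1 : ∀ i, A i) ∈ I.colon (Ideal.span {x}) := ht ▸ Submodule.mem_top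
      simpa using Ideal.mem_colon_span_singleton.mp h1
    have hcol : (I.colon (Ideal.span {x})).IsMaximal := by
      rw [← (IE_isMaximal A i).eq_of_le hcolne hle]
      exact IE_isMaximal A i
    exact hno _ (covBy_of_colon_isMaximal hx hcol)
  choose F hF1 hF2 using fun x : {y : ∀ i, A i // y ∉ I} => hstep x.1 x.2
  let c : ℕ → {y : ∀ i, A i // y ∉ I} := fun k =>
    Nat.rec ⟨Pi.single i 1, hi⟩ (fun _ xk => ⟨F xk * xk.1, hF2 xk⟩) k
  have hs : ∀ k, F (c k) i ∈ IsLocalRing.maximalIdeal (A i) := fun k => hF1 (c k)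
  obtain ⟨N, hN⟩ := hT i (fun k => F (c k) i) hs
  have hprod : ∀ k, ((c (k+1)).1 : ∀ i, A i) =
      (∏ j ∈ Finset.range (k+1), F (c j)) * Pi.single i 1 := by
    intro k
    induction k with
    | zero => simp [c]
    | succ k ih =>
      have : ((c (k+2)).1 : ∀ i, A i) = F (c (k+1)) * (c (k+1)).1 := rfl
      rw [this, ih, Finset.prod_range_succ (fun j => F (c j)) (k+1),
        mul_comm (∏ j ∈ Finset.range (k+1), F (c j)) (F (c (k+1))), mul_assoc]
  have hzero : ((c (N+1)).1 : ∀ i, A i) = 0 := by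
    rw [hprod N]
    ext j
    by_cases hj : j = i
    · subst hj
      simp only [Pi.mul_apply, Pi.single_eq_same, mul_one, Finset.prod_apply, Pi.zero_apply]
      exact hN
    · simp [Pi.single_eq_of_ne hj]
  exact (c (N+1)).2 (hzero ▸ I.zero_mem)
end Pi

section Transfer
variable {R : Type*} {S : Type*} [CommRing R] [CommRing S]

lemma isSemiLocalRing_of_equiv (e : R ≃+* S) (h : IsSemiLocalRing S) : IsSemiLocalRing R := by
  apply Set.Finite.subset (h.image (Ideal.comap (e : R →+* S)))
  intro I hI
  haveI : I.IsMaximal := hI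
  refine ⟨Ideal.comap (e.symm : S →+* R) I,
    Ideal.comap_isMaximal_of_surjective _ e.symm.surjective, ?_⟩
  rw [Ideal.comap_comap, RingEquiv.symm_comp, Ideal.comap_id]

lemma isSemiArtinianRing_of_equiv (e : R ≃+* S) (h : IsSemiArtinianRing S) :
    IsSemiArtinianRing R := by
  intro I hIne
  let oi : Ideal S ≃o Ideal R := Ideal.relIsoOfBijective (e : R →+* S) e.bijective
  have hne : oi.symm I ≠ ⊤ := fun hc => hIne (by
    rw [← oi.apply_symm_apply I, hc, OrderIso.map_top])
  obtain ⟨J, hJ⟩ := h (oi.symm I) hne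
  refine ⟨oi J, ?_⟩
  have := (apply_covBy_apply_iff oi).mpr hJ
  rwa [oi.apply_symm_apply] at this
end Transfer

private theorem forward_aux (R : Type u) [CommRing R] (hSL : IsSemiLocalRing R) (hSA : IsSemiArtinianRing R) :
    ∃ (n : ℕ) (A : Fin n → Type u) (hcr : ∀ i, CommRing (A i))
      (hloc : ∀ i, letI := hcr i; IsLocalRing (A i)),
      (∀ i, letI := hcr i; letI := hloc i;
        (IsLocalRing.maximalIdeal (A i)).IsTNilpotent) ∧
      Nonempty (R ≃+* ∀ i, A i) := by
  classical
  by_cases htriv : Subsingleton R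
  · refine ⟨0, fun _ => PUnit, fun _ => inferInstance, fun i => i.elim0,
      fun i => i.elim0, ⟨?_⟩⟩
    exact RingEquiv.ofBijective (Pi.ringHom fun i : Fin 0 => i.elim0)
      ⟨fun a b _ => Subsingleton.elim a b, fun y => ⟨0, Subsingleton.elim _ _⟩⟩
  haveI : Nontrivial R := not_subsingleton_iff_nontrivial.mp htriv
  haveI fS : Fintype {I : Ideal R | I.IsMaximal} := hSL.fintype
  set n := Fintype.card {I : Ideal R | I.IsMaximal} with hn
  let eS : Fin n ≃ {I : Ideal R | I.IsMaximal} := (Fintype.equivFin _).symm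
  let m : Fin n → Ideal R := fun i => (eS i).1
  have hm : ∀ i, (m i).IsMaximal := fun i => (eS i).2
  have hmsurj : ∀ M : Ideal R, M.IsMaximal → ∃ i, m i = M := fun M hM =>
    ⟨eS.symm ⟨M, hM⟩, by
      show ((eS (eS.symm ⟨M, hM⟩) : {I : Ideal R | I.IsMaximal}) : Ideal R) = M
      rw [Equiv.apply_symm_apply]⟩
  have hminj : Function.Injective m := fun i j h => eS.injective (Subtype.ext h)
  have hinf : (⨅ i, m i) = Ideal.jacobson ⊥ := by
    rw [Ideal.jacobson]
    apply le_antisymm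
    · apply le_sInf
      rintro J ⟨-, hJ⟩
      obtain ⟨i, rfl⟩ := hmsurj J hJ
      exact iInf_le _ _
    · exact le_iInf fun i => sInf_le ⟨bot_le, hm i⟩
  have hcop : Pairwise (Function.onFun IsCoprime m) := fun i j hij =>
    (Ideal.isCoprime_iff_sup_eq).mpr
      (Ideal.IsMaximal.coprime_of_ne (hm i) (hm j) fun h => hij (hminj h))
  set f : R →+* ∀ i, R ⧸ m i := Pi.ringHom fun i => Ideal.Quotient.mk (m i) with hf
  have hker : RingHom.ker f = Ideal.jacobson ⊥ := by
    rw [← hinf]; exact Ideal.ker_Pi_Quotient_mk m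
  have hfsurj : Function.Surjective f := by
    intro g
    obtain ⟨r, hr⟩ := Ideal.pi_quotient_surjective hcop g
    refine ⟨r, funext fun i => ?_⟩
    exact hr i
  have hTN := jacobson_bot_isTNilpotent hSA
  have hnil : ∀ x ∈ RingHom.ker f, IsNilpotent x := fun x hx =>
    hTN.isNilpotent_of_mem (hker ▸ hx)
  obtain ⟨e, he, hfe⟩ := (CompleteOrthogonalIdempotents.single (fun i => R ⧸ m i)
    ).lift_of_isNilpotent_ker f hnil (fun i => RingHom.mem_range.mpr (hfsurj _))
  have hmod : ∀ i j, Ideal.Quotient.mk (m j) (e i) =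
      (Pi.single i 1 : ∀ i, R ⧸ m i) j := fun i j => congrFun (congrFun hfe i : f (e i) = _) j
  have h1 : ∀ i, 1 - e i ∈ m i := by
    intro i
    rw [← Ideal.Quotient.eq_zero_iff_mem, map_sub, map_one, hmod i i, Pi.single_eq_same,
      sub_self]
  have h2 : ∀ i j, i ≠ j → e i ∈ m j := by
    intro i j hij
    rw [← Ideal.Quotient.eq_zero_iff_mem, hmod i j, Pi.single_eq_of_ne (Ne.symm hij)]
  -- the factors
  set q : ∀ i : Fin n, R →+* R ⧸ Ideal.span {1 - e i} :=
    fun i => Ideal.Quotient.mk (Ideal.span {1 - e i}) with hq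
  have hqsurj : ∀ i, Function.Surjective (q i) := fun i => Ideal.Quotient.mk_surjective
  have hspan_le : ∀ i, Ideal.span {1 - e i} ≤ m i := fun i =>
    (Ideal.span_singleton_le_iff_mem _).mpr (h1 i)
  have hkey : ∀ (i : Fin n) (M : Ideal (R ⧸ Ideal.span {1 - e i})), M.IsMaximal →
      M = Ideal.map (q i) (m i) := by
    intro i M hM
    haveI := hM
    have hc : (Ideal.comap (q i) M).IsMaximal :=
      Ideal.comap_isMaximal_of_surjective _ (hqsurj i)
    obtain ⟨j, hj⟩ := hmsurj _ hc
    have h1e : 1 - e i ∈ Ideal.comap (q i) M := by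
      show q i (1 - e i) ∈ M
      rw [show q i (1 - e i) = 0 from Ideal.Quotient.eq_zero_iff_mem.mpr
        (Ideal.mem_span_singleton_self _)]
      exact M.zero_mem
    have hji : j = i := by
      by_contra hne
      have hei : e i ∈ m j := h2 i j (Ne.symm hne)
      have : (1 : R) ∈ m j := by
        have := (m j).add_mem hei (hj ▸ h1e)
        simpa using this
      exact (hm j).ne_top ((Ideal.eq_top_iff_one _).mpr this)
    have : Ideal.comap (q i) M = m i := by rw [← hj, hji]
    rw [← this, Ideal.map_comap_of_surjective _ (hqsurj i)]
  have hnt : ∀ i, Nontrivial (R ⧸ Ideal.span {1 - e i}) := by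
    intro i
    refine Ideal.Quotient.nontrivial_iff.mpr fun hc => (hm i).ne_top (eq_top_iff.mpr ?_)
    rw [← hc]
    exact hspan_le i
  have hloc : ∀ i, IsLocalRing (R ⧸ Ideal.span {1 - e i}) := by
    intro i
    haveI := hnt i
    obtain ⟨M, hM⟩ := Ideal.exists_maximal (R ⧸ Ideal.span {1 - e i})
    exact IsLocalRing.of_unique_max_ideal
      ⟨M, hM, fun M' hM' => (hkey i M' hM').trans (hkey i M hM).symm⟩
  have hmax : ∀ i, letI := hloc i;
      IsLocalRing.maximalIdeal (R ⧸ Ideal.span {1 - e i}) = Ideal.map (q i) (m i) := by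
    intro i
    letI := hloc i
    exact hkey i _ (IsLocalRing.maximalIdeal.isMaximal _)
  have hT : ∀ i, letI := hloc i;
      (IsLocalRing.maximalIdeal (R ⧸ Ideal.span {1 - e i})).IsTNilpotent := by
    intro i
    letI := hloc i
    intro rq hrq
    have hlift : ∀ k, ∃ y : R, y ∈ Ideal.jacobson (⊥ : Ideal R) ∧ q i y = rq k := by
      intro k
      have hmem := hrq k
      rw [hmax i, Ideal.mem_map_iff_of_surjective _ (hqsurj i)] at hmem
      obtain ⟨x, hxm, hxq⟩ := hmem
      refine ⟨x * e i, ?_, ?_⟩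
      · rw [← hinf, Ideal.mem_iInf]
        intro j
        by_cases hji : j = i
        · subst hji; exact (m j).mul_mem_right _ hxm
        · exact (m j).mul_mem_left _ (h2 i j (Ne.symm hji))
      · rw [← hxq]
        rw [Ideal.Quotient.mk_eq_mk_iff_sub_mem]
        exact Ideal.mem_span_singleton.mpr ⟨-x, by ring⟩
    choose y hy1 hy2 using hlift
    obtain ⟨N, hN⟩ := hTN y hy1
    refine ⟨N, ?_⟩
    have : (∏ k ∈ Finset.range (N+1), rq k) = q i (∏ k ∈ Finset.range (N+1), y k) := by
      rw [map_prod]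
      exact Finset.prod_congr rfl fun k _ => (hy2 k).symm
    rw [this, hN, map_zero]
  exact ⟨n, fun i => R ⧸ Ideal.span {1 - e i}, fun i => inferInstance, hloc, hT,
    ⟨RingEquiv.ofBijective (Pi.ringHom fun i => q i) he.bijective_pi⟩⟩


/-- A commutative ring is semi-local and semi-artinian (i.e. perfect) if and only if
it is isomorphic to a finite direct product of local rings whose maximal ideals
are T-nilpotent. -/
theorem isSemiLocal_and_isSemiArtinian_iff_finite_product_of_local_TNilpotent
    (R : Type u) [CommRing R] :
    (IsSemiLocalRing R ∧ IsSemiArtinianRing R) ↔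
    ∃ (n : ℕ) (A : Fin n → Type u) (hcr : ∀ i, CommRing (A i))
      (hloc : ∀ i, letI := hcr i; IsLocalRing (A i)),
      (∀ i, letI := hcr i; letI := hloc i;
        (IsLocalRing.maximalIdeal (A i)).IsTNilpotent) ∧
      Nonempty (R ≃+* ∀ i, A i) := by
  constructor
  · rintro ⟨hSL, hSA⟩
    exact forward_aux R hSL hSA
  · rintro ⟨n, A, hcr, hloc, hT, ⟨φ⟩⟩
    haveI : ∀ i, IsLocalRing (A i) := fun i => hloc i
    exact ⟨isSemiLocalRing_of_equiv φ (isSemiLocalRing_pi A),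
      isSemiArtinianRing_of_equiv φ (isSemiArtinianRing_pi A (fun i => hT i))⟩
end
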